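/- A WMG≤ system without source places is live if and only if every elementary circuit P-subsystem of it satisfies property E (i.e. every potentially reachable marking of that subsystem enables at least one transition of the subsystem). -/

import Mathlib

open scoped Classical

structure PetriNet (P T : Type) where
  pre : P → T → ℕ
  post : T → P → ℕ

namespace PetriNet

variable {P T : Type}

def enabled (N : PetriNet P T) (M : P → ℕ) (t : T) : Prop :=
  ∀ p, N.pre p t ≤ M p

def fire (N : PetriNet P T) (M : P → ℕ) (t : T) : P → ℕ :=
  fun p => M p - N.pre p t + N.post t p

def feasible (N : PetriNet P T) : (P → ℕ) → List T → (P → ℕ) → Prop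
  | M, [], M' => M' = M
  | M, t :: σ, M' => N.enabled M t ∧ feasible N (N.fire M t) σ M'

def reachable (N : PetriNet P T) (M0 M : P → ℕ) : Prop :=
  ∃ σ : List T, N.feasible M0 σ M

def inc (N : PetriNet P T) (p : P) (t : T) : ℤ :=
  (N.post t p : ℤ) - (N.pre p t : ℤ)

def potReach [Fintype T] (N : PetriNet P T) (M0 M : P → ℕ) : Prop :=
  ∃ Y : T → ℕ, ∀ p, (M p : ℤ) = (M0 p : ℤ) + ∑ t, N.inc p t * (Y t : ℤ)

def live (N : PetriNet P T) (M0 : P → ℕ) : Prop :=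
  ∀ (t : T) (M : P → ℕ), N.reachable M0 M →
    ∃ M', N.reachable M M' ∧ N.enabled M' t

def bounded (N : PetriNet P T) (M0 : P → ℕ) : Prop :=
  ∃ k : ℕ, ∀ M : P → ℕ, N.reachable M0 M → ∀ p, M p ≤ k

def reversible (N : PetriNet P T) (M0 : P → ℕ) : Prop :=
  ∀ M : P → ℕ, N.reachable M0 M → N.reachable M M0

def rev (N : PetriNet P T) : PetriNet P T :=
  ⟨fun p t => N.post t p, fun t p => N.pre p t⟩

def propR (N : PetriNet P T) (M0 : P → ℕ) : Prop :=
  N.reversible M0 ∧ N.rev.reversible M0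

def placePre [Fintype T] (N : PetriNet P T) (p : P) : Finset T :=
  Finset.univ.filter fun t => 0 < N.post t p

def placePost [Fintype T] (N : PetriNet P T) (p : P) : Finset T :=
  Finset.univ.filter fun t => 0 < N.pre p t

def transPre [Fintype P] (N : PetriNet P T) (t : T) : Finset P :=
  Finset.univ.filter fun p => 0 < N.pre p t

def transPost [Fintype P] (N : PetriNet P T) (t : T) : Finset P :=
  Finset.univ.filter fun p => 0 < N.post t p

def arc (N : PetriNet P T) : (P ⊕ T) → (P ⊕ T) → Prop
  | Sum.inl p, Sum.inr t => 0 < N.pre p t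
  | Sum.inr t, Sum.inl p => 0 < N.post t p
  | _, _ => False

def stronglyConnected (N : PetriNet P T) : Prop :=
  ∀ x y : P ⊕ T, Relation.ReflTransGen N.arc x y

def connectedNet (N : PetriNet P T) : Prop :=
  ∀ x y : P ⊕ T, Relation.ReflTransGen (fun a b => N.arc a b ∨ N.arc b a) x y

def ordinary (N : PetriNet P T) : Prop :=
  ∀ p t, N.pre p t ≤ 1 ∧ N.post t p ≤ 1

def isWMGle [Fintype T] (N : PetriNet P T) : Prop :=
  ∀ p, (N.placePre p).card ≤ 1 ∧ (N.placePost p).card ≤ 1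

def deadlock (N : PetriNet P T) (M : P → ℕ) : Prop :=
  ∀ t, ¬ N.enabled M t

end PetriNet


namespace PetriNet

variable {P T : Type}

/-- A transition is adjacent to the place set `D`. -/
def adjT (N : PetriNet P T) (D : Finset P) (t : T) : Prop :=
  ∃ p ∈ D, 0 < N.pre p t ∨ 0 < N.post t p

/-- The P-subnet induced by the place set `D`:
its transitions are those adjacent to `D`, weights are restricted. -/
def psubnet (N : PetriNet P T) (D : Finset P) :
    PetriNet {p : P // p ∈ D} {t : T // N.adjT D t} :=
  ⟨fun p t => N.pre p.1 t.1, fun t p => N.post t.1 p.1⟩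

/-- The net is a single directed cycle visiting each node exactly once. -/
def isCircuitNet [Fintype P] [Fintype T] (N : PetriNet P T) : Prop :=
  Nonempty (P ⊕ T) ∧ N.stronglyConnected ∧
  (∀ p, (N.placePre p).card = 1 ∧ (N.placePost p).card = 1) ∧
  (∀ t, (N.transPre t).card = 1 ∧ (N.transPost t).card = 1)

end PetriNet

namespace PetriNet

variable {P T : Type}

/-- Number of occurrences of `t` in a list. -/
noncomputable def cnt : List T → T → ℕ
  | [], _ => 0
  | s :: σ, t => cnt σ t + if s = t then 1 else 0

@[simp] lemma cnt_nil (t : T) : cnt ([] : List T) t = 0 := rfl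

lemma cnt_cons (s : T) (σ : List T) (t : T) :
    cnt (s :: σ) t = cnt σ t + if s = t then 1 else 0 := rfl

lemma cnt_append (σ₁ σ₂ : List T) (t : T) :
    cnt (σ₁ ++ σ₂) t = cnt σ₁ t + cnt σ₂ t := by
  induction σ₁ with
  | nil => simp
  | cons s σ ih => simp [cnt_cons, ih]; ring

lemma feasible_append (N : PetriNet P T) (σ₁ σ₂ : List T) (M M'' : P → ℕ) :
    N.feasible M (σ₁ ++ σ₂) M'' ↔ ∃ M', N.feasible M σ₁ M' ∧ N.feasible M' σ₂ M'' := by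
  induction σ₁ generalizing M with
  | nil =>
    simp only [List.nil_append, feasible]
    constructor
    · intro h; exact ⟨M, rfl, h⟩
    · rintro ⟨M', rfl, h⟩; exact h
  | cons t σ ih =>
    constructor
    · rintro ⟨hen, hfe⟩
      obtain ⟨M', h1, h2⟩ := (ih _).1 hfe
      exact ⟨M', ⟨hen, h1⟩, h2⟩
    · rintro ⟨M', ⟨hen, h1⟩, h2⟩
      exact ⟨hen, (ih _).2 ⟨M', h1, h2⟩⟩

lemma reachable_refl (N : PetriNet P T) (M : P → ℕ) : N.reachable M M := ⟨[], rfl⟩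

lemma reachable_trans {N : PetriNet P T} {M1 M2 M3 : P → ℕ}
    (h1 : N.reachable M1 M2) (h2 : N.reachable M2 M3) : N.reachable M1 M3 := by
  obtain ⟨σ1, h1⟩ := h1; obtain ⟨σ2, h2⟩ := h2
  exact ⟨σ1 ++ σ2, (N.feasible_append σ1 σ2 M1 M3).2 ⟨M2, h1, h2⟩⟩

lemma reachable_fire {N : PetriNet P T} {M : P → ℕ} {t : T} (h : N.enabled M t) :
    N.reachable M (N.fire M t) := ⟨[t], h, rfl⟩

lemma state_eq [Fintype T] (N : PetriNet P T) (σ : List T) :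
    ∀ (M M' : P → ℕ), N.feasible M σ M' →
    ∀ p, (M' p : ℤ) = (M p : ℤ) + ∑ t, N.inc p t * (cnt σ t : ℤ) := by
  induction σ with
  | nil => intro M M' h p; cases h; simp
  | cons u σ ih =>
    intro M M' h p
    obtain ⟨hen, hfe⟩ := h
    have hfire : ((N.fire M u) p : ℤ) = (M p : ℤ) + N.inc p u := by
      unfold fire inc
      have := hen p
      push_cast [Nat.cast_sub this]
      ring
    have := ih _ _ hfe p
    rw [this, hfire]
    have hsum : ∑ t, N.inc p t * (cnt (u :: σ) t : ℤ)
        = (∑ t, N.inc p t * (cnt σ t : ℤ)) + N.inc p u := by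
      simp only [cnt_cons]
      push_cast
      rw [Finset.sum_congr rfl (fun t _ => by split <;> ring :
        ∀ t ∈ Finset.univ, N.inc p t * ((cnt σ t : ℤ) + if u = t then 1 else 0)
          = N.inc p t * (cnt σ t : ℤ) + (if u = t then N.inc p t else 0))]
      rw [Finset.sum_add_distrib, Finset.sum_ite_eq]
      simp
    rw [hsum]; ring

end PetriNet
namespace PetriNet

variable {P T : Type}

/-- In a WMG≤, a place has at most one consumer. -/
lemma consumer_unique [Fintype T] {N : PetriNet P T} (hwmg : N.isWMGle)
    {p : P} {t t' : T} (h : 0 < N.pre p t) (h' : 0 < N.pre p t') : t = t' := by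
  have h1 : t ∈ N.placePost p := by simp [placePost, h]
  have h2 : t' ∈ N.placePost p := by simp [placePost, h']
  exact Finset.card_le_one.1 (hwmg p).2 t h1 t' h2

/-- In a WMG≤, a place has at most one producer. -/
lemma producer_unique [Fintype T] {N : PetriNet P T} (hwmg : N.isWMGle)
    {p : P} {t t' : T} (h : 0 < N.post t p) (h' : 0 < N.post t' p) : t = t' := by
  have h1 : t ∈ N.placePre p := by simp [placePre, h]
  have h2 : t' ∈ N.placePre p := by simp [placePre, h']
  exact Finset.card_le_one.1 (hwmg p).1 t h1 t' h2

/-- Sum over all transitions of a function vanishing off the adjacent ones equals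
the sum over the subtype of adjacent transitions. -/
lemma sum_adj [Fintype T] (N : PetriNet P T) (D : Finset P) (f : T → ℤ)
    (hf : ∀ t, ¬ N.adjT D t → f t = 0) :
    ∑ t, f t = ∑ t' : {t : T // N.adjT D t}, f t'.1 := by
  classical
  rw [← Finset.sum_filter_of_ne (p := fun t => N.adjT D t) (by
    intro t _ h
    by_contra hc
    exact h (hf t hc))]
  rw [← Finset.subtype_univ, Finset.sum_subtype_eq_sum_filter]

end PetriNet
namespace PetriNet

variable {P T : Type}

lemma live_to_E [Fintype P] [Fintype T]
    (N : PetriNet P T) (M0 : P → ℕ) (hwmg : N.isWMGle) (hlive : N.live M0)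
    (D : Finset P) (hcirc : (N.psubnet D).isCircuitNet)
    (M : {p : P // p ∈ D} → ℕ) (hpr : (N.psubnet D).potReach (fun p => M0 p.1) M) :
    ∃ t, (N.psubnet D).enabled M t := by
  classical
  by_contra hdead
  push_neg at hdead
  obtain ⟨Y, hY⟩ := hpr
  -- dead witnesses
  have hwit : ∀ t' : {t : T // N.adjT D t}, ∃ p' : {p : P // p ∈ D},
      M p' < N.pre p'.1 t'.1 := by
    intro t'
    have h := hdead t'
    unfold enabled at h
    push_neg at h
    obtain ⟨p', hp'⟩ := h
    exact ⟨p', hp'⟩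
  -- global count vector
  set yh : T → ℕ := fun t => if h : N.adjT D t then Y ⟨t, h⟩ else 0 with hyhdef
  have hyhadj : ∀ (t : T) (h : N.adjT D t), yh t = Y ⟨t, h⟩ := by
    intro t h; simp [hyhdef, h]
  have hM : ∀ p' : {p : P // p ∈ D},
      (M p' : ℤ) = (M0 p'.1 : ℤ) + ∑ t, N.inc p'.1 t * (yh t : ℤ) := by
    intro p'
    rw [hY p']
    congr 1
    rw [N.sum_adj D (fun t => N.inc p'.1 t * (yh t : ℤ)) (by
      intro t ht
      have : yh t = 0 := by simp [hyhdef, ht]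
      simp [this])]
    apply Finset.sum_congr rfl
    intro t' _
    rw [hyhadj t'.1 t'.2]
    rfl
  -- counting bound
  have bound : ∀ (σ : List T) (M' : P → ℕ), N.feasible M0 σ M' →
      ∀ t, N.adjT D t → cnt σ t ≤ yh t := by
    intro σ
    induction σ using List.reverseRecOn with
    | nil => intro M' _ t _; simp
    | append_singleton σ u ih =>
      intro M' hfe t hadj
      obtain ⟨Mm, hσ, hu⟩ := (N.feasible_append σ [u] M0 M').1 hfe
      obtain ⟨henu, _⟩ := hu
      have ihσ := ih Mm hσ
      rw [cnt_append]
      by_cases hut : u = t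
      · subst hut
        have hle : cnt σ u ≤ yh u := ihσ u hadj
        suffices hne : cnt σ u ≠ yh u by
          simp [cnt_cons, cnt_nil]
          omega
        intro heq
        obtain ⟨p', hp'⟩ := hwit ⟨u, hadj⟩
        set q := p'.1 with hqdef
        have hq1 : 0 < N.pre q u := lt_of_le_of_lt (Nat.zero_le _) hp'
        have hMm : (Mm q : ℤ) = (M0 q : ℤ) + ∑ t, N.inc q t * (cnt σ t : ℤ) :=
          N.state_eq σ M0 Mm hσ q
        have henq : (N.pre q u : ℤ) ≤ (Mm q : ℤ) := by exact_mod_cast henu q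
        have hterm : ∀ t, N.inc q t * (cnt σ t : ℤ) ≤ N.inc q t * (yh t : ℤ) := by
          intro t
          by_cases htu : t = u
          · subst htu; rw [heq]
          · have hpre0 : N.pre q t = 0 := by
              by_contra h0
              exact htu (consumer_unique hwmg (Nat.pos_of_ne_zero h0) hq1)
            by_cases hpost : 0 < N.post t q
            · have hadjt : N.adjT D t := ⟨q, p'.2, Or.inr hpost⟩
              have hct := ihσ t hadjt
              have hinc : (0:ℤ) ≤ N.inc q t := by
                unfold inc; rw [hpre0]; push_cast; omega
              exact mul_le_mul_of_nonneg_left (by exact_mod_cast hct) hinc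
            · have : N.inc q t = 0 := by
                unfold inc; rw [hpre0]
                have : N.post t q = 0 := by omega
                rw [this]; simp
              rw [this]; simp
        have hle2 : (Mm q : ℤ) ≤ (M p' : ℤ) := by
          rw [hMm, hM p', ← hqdef]
          exact add_le_add_right (Finset.sum_le_sum fun t _ => hterm t) _
        have : (M p' : ℤ) < (N.pre q u : ℤ) := by exact_mod_cast hp'
        linarith
      · have : cnt [u] t = 0 := by simp [cnt_cons, cnt_nil, hut]
        rw [this, Nat.add_zero]
        exact ihσ t hadj
  -- some adjacent transition exists
  obtain ⟨u0, hu0adj⟩ : ∃ u0 : T, N.adjT D u0 := by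
    obtain ⟨x⟩ := hcirc.1
    cases x with
    | inr t' => exact ⟨t'.1, t'.2⟩
    | inl p' =>
      have h1 := (hcirc.2.2.1 p').1
      have hne : ((N.psubnet D).placePre p').Nonempty := by
        rw [← Finset.card_pos, h1]; norm_num
      obtain ⟨t', _⟩ := hne
      exact ⟨t'.1, t'.2⟩
  -- liveness pumps the count of u0
  have pump : ∀ n : ℕ, ∃ σ M', N.feasible M0 σ M' ∧ n ≤ cnt σ u0 := by
    intro n; induction n with
    | zero => exact ⟨[], M0, rfl, by simp⟩
    | succ n ihn =>
      obtain ⟨σ, M', hfe, hcnt⟩ := ihn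
      obtain ⟨M'', hr, hen⟩ := hlive u0 M' ⟨σ, hfe⟩
      obtain ⟨ρ, hρ⟩ := hr
      refine ⟨σ ++ (ρ ++ [u0]), N.fire M'' u0, ?_, ?_⟩
      · rw [N.feasible_append]
        refine ⟨M', hfe, ?_⟩
        rw [N.feasible_append]
        exact ⟨M'', hρ, hen, rfl⟩
      · rw [cnt_append, cnt_append]
        simp [cnt_cons]
        omega
  obtain ⟨σ, M', hfe, hcnt⟩ := pump (yh u0 + 1)
  have := bound σ M' hfe u0 hu0adj
  omega

end PetriNet
namespace PetriNet

variable {P T : Type}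

/-- If `t` is never enabled from `M1`, each of its input places is
nondecreasing along runs within the cone of `M1`. -/
lemma mono_place [Fintype T] {N : PetriNet P T} (hwmg : N.isWMGle) {M1 : P → ℕ} {t : T}
    (hdead : ∀ M', N.reachable M1 M' → ¬ N.enabled M' t)
    {p : P} (hp : 0 < N.pre p t) :
    ∀ (σ : List T) (M2 M3 : P → ℕ), N.reachable M1 M2 → N.feasible M2 σ M3 → M2 p ≤ M3 p := by
  intro σ
  induction σ with
  | nil =>
    intro M2 M3 _ h
    have h' : M3 = M2 := h
    rw [h']
  | cons u σ ih =>
    intro M2 M3 hr h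
    obtain ⟨hen, hfe⟩ := h
    have hut : u ≠ t := fun he => hdead M2 hr (he ▸ hen)
    have hpre0 : N.pre p u = 0 := by
      by_contra h0
      exact hut (consumer_unique hwmg (Nat.pos_of_ne_zero h0) hp)
    have h2 : M2 p ≤ N.fire M2 u p := by unfold fire; rw [hpre0]; omega
    exact le_trans h2 (ih _ _ (reachable_trans hr (reachable_fire hen)) hfe)

lemma mono_place' [Fintype T] {N : PetriNet P T} (hwmg : N.isWMGle) {M1 : P → ℕ} {t : T}
    (hdead : ∀ M', N.reachable M1 M' → ¬ N.enabled M' t)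
    {p : P} (hp : 0 < N.pre p t) {M2 M3 : P → ℕ}
    (h12 : N.reachable M1 M2) (h23 : N.reachable M2 M3) : M2 p ≤ M3 p := by
  obtain ⟨σ, hσ⟩ := h23
  exact mono_place hwmg hdead hp σ M2 M3 h12 hσ

/-- A transition never enabled from `M1` has a persistently starving input place. -/
lemma starving [Fintype P] [Fintype T] {N : PetriNet P T} (hwmg : N.isWMGle)
    {M1 : P → ℕ} {t : T}
    (hdead : ∀ M', N.reachable M1 M' → ¬ N.enabled M' t) :
    ∃ M2, N.reachable M1 M2 ∧ ∃ p, 0 < N.pre p t ∧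
      ∀ M3, N.reachable M2 M3 → M3 p < N.pre p t := by
  classical
  by_contra hc
  push_neg at hc
  -- hc : ∀ M2, reachable M1 M2 → ∀ p, 0 < pre p t → ∃ M3, reachable M2 M3 ∧ pre p t ≤ M3 p
  have key : ∀ G : Finset P, ∃ M2, N.reachable M1 M2 ∧
      ∀ p ∈ G, 0 < N.pre p t → N.pre p t ≤ M2 p := by
    intro G
    induction G using Finset.induction_on with
    | empty => exact ⟨M1, N.reachable_refl M1, by simp⟩
    | insert _ _ hnotmem ih =>
      rename_i a G
      obtain ⟨M2, hr2, hG⟩ := ih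
      by_cases ha : 0 < N.pre a t
      · obtain ⟨M3, hr3, hle⟩ := hc M2 hr2 a ha
        refine ⟨M3, reachable_trans hr2 hr3, ?_⟩
        intro p hmem hp
        rcases Finset.mem_insert.1 hmem with rfl | hpG
        · exact hle
        · exact le_trans (hG p hpG hp) (mono_place' hwmg hdead hp hr2 hr3)
      · refine ⟨M2, hr2, ?_⟩
        intro p hmem hp
        rcases Finset.mem_insert.1 hmem with rfl | hpG
        · exact absurd hp ha
        · exact hG p hpG hp
  obtain ⟨M2, hr2, hall⟩ := key Finset.univ
  refine hdead M2 hr2 ?_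
  intro p
  by_cases hp : 0 < N.pre p t
  · exact hall p (Finset.mem_univ p) hp
  · omega

/-- The producer of a persistently starving place eventually becomes dead. -/
lemma producer_dies [Fintype P] [Fintype T] {N : PetriNet P T} (hwmg : N.isWMGle)
    {M1 M2 : P → ℕ} {t u : T} {p : P}
    (hdead : ∀ M', N.reachable M1 M' → ¬ N.enabled M' t)
    (hr12 : N.reachable M1 M2)
    (hp : 0 < N.pre p t)
    (hu : 0 < N.post u p)
    (hfrz : ∀ M3, N.reachable M2 M3 → M3 p < N.pre p t) :
    ∃ M2', N.reachable M2 M2' ∧ ∀ M', N.reachable M2' M' → ¬ N.enabled M' u := by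
  classical
  by_cases hut : u = t
  · subst hut
    exact ⟨M2, N.reachable_refl M2, fun M' hr' => hdead M' (reachable_trans hr12 hr')⟩
  · have hpreu : N.pre p u = 0 := by
      by_contra h0
      exact hut (consumer_unique hwmg (Nat.pos_of_ne_zero h0) hp)
    set S : Set ℕ := {n | ∃ M3, N.reachable M2 M3 ∧ M3 p = n} with hS
    have hSne : S.Nonempty := ⟨M2 p, M2, N.reachable_refl M2, rfl⟩
    have hSbdd : BddAbove S := by
      refine ⟨N.pre p t, ?_⟩
      rintro n ⟨M3, hr3, rfl⟩
      exact le_of_lt (hfrz M3 hr3)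
    obtain ⟨M2', hr2', hval⟩ : ∃ M3, N.reachable M2 M3 ∧ M3 p = sSup S :=
      Nat.sSup_mem hSne hSbdd
    refine ⟨M2', hr2', ?_⟩
    intro M' hr' hen
    have h1 : M2' p ≤ M' p :=
      mono_place' hwmg hdead hp (reachable_trans hr12 hr2') hr'
    have h2 : M' p ≤ sSup S :=
      le_csSup hSbdd ⟨M', reachable_trans hr2' hr', rfl⟩
    have hfirep : N.fire M' u p = M' p + N.post u p := by
      unfold fire; rw [hpreu]; omega
    have hmem : N.fire M' u p ∈ S :=
      ⟨N.fire M' u, reachable_trans hr2' (reachable_trans hr' (reachable_fire hen)), rfl⟩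
    have h3 := le_csSup hSbdd hmem
    omega

lemma step_lemma [Fintype P] [Fintype T] {N : PetriNet P T} (hwmg : N.isWMGle)
    (hnosrc : ∀ p : P, ∃ t : T, 0 < N.post t p)
    {M1 : P → ℕ} {t : T}
    (hdead : ∀ M', N.reachable M1 M' → ¬ N.enabled M' t) :
    ∃ (M2 : P → ℕ) (u : T) (p : P), N.reachable M1 M2 ∧ 0 < N.pre p t ∧ 0 < N.post u p ∧
      (∀ M', N.reachable M2 M' → ¬ N.enabled M' u) ∧
      (∀ M3, N.reachable M2 M3 → M3 p < N.pre p t) := by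
  obtain ⟨M2a, hra, p, hp, hfrz⟩ := starving hwmg hdead
  obtain ⟨u, hu⟩ := hnosrc p
  obtain ⟨M2, hr2, hdeadu⟩ := producer_dies hwmg hdead hra hp hu hfrz
  exact ⟨M2, u, p, reachable_trans hra hr2, hp, hu, hdeadu,
    fun M3 hr3 => hfrz M3 (reachable_trans hr2 hr3)⟩

end PetriNet
namespace PetriNet

variable {P T : Type}

/-- State of the dead-transition chain. -/
structure ChainSt [Fintype T] (N : PetriNet P T) (M0 : P → ℕ) where
  M : P → ℕ
  t : T
  hr : N.reachable M0 M
  hd : ∀ M', N.reachable M M' → ¬ N.enabled M' t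

lemma not_live_bad [Fintype P] [Fintype T]
    (N : PetriNet P T) (M0 : P → ℕ) (hwmg : N.isWMGle)
    (hnosrc : ∀ p : P, ∃ t : T, 0 < N.post t p)
    (hnl : ¬ N.live M0) :
    ∃ D : Finset P, (N.psubnet D).isCircuitNet ∧
      ∃ M, (N.psubnet D).potReach (fun p => M0 p.1) M ∧
        ∀ t', ¬ (N.psubnet D).enabled M t' := by
  classical
  unfold live at hnl
  push_neg at hnl
  obtain ⟨t0, Mst, hrst, hd0⟩ := hnl
  have step : ∀ s : ChainSt N M0, ∃ s' : ChainSt N M0, ∃ p : P,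
      N.reachable s.M s'.M ∧ 0 < N.pre p s.t ∧ 0 < N.post s'.t p ∧
      ∀ M3, N.reachable s'.M M3 → M3 p < N.pre p s.t := by
    intro s
    obtain ⟨M2, u, p, h1, h2, h3, h4, h5⟩ := step_lemma hwmg hnosrc s.hd
    exact ⟨⟨M2, u, reachable_trans s.hr h1, h4⟩, p, h1, h2, h3, h5⟩
  choose f g hf1 hf2 hf3 hf4 using step
  set s0 : ChainSt N M0 := ⟨Mst, t0, hrst, fun M' hr he => hd0 M' hr he⟩ with hs0
  set sq : ℕ → ChainSt N M0 := fun n => f^[n] s0 with hsq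
  have hsqsucc : ∀ n, sq (n+1) = f (sq n) := fun n => Function.iterate_succ_apply' f n s0
  set ts : ℕ → T := fun n => (sq n).t with hts0
  set pl : ℕ → P := fun n => g (sq n) with hpl0
  have Hr : ∀ n, N.reachable (sq n).M (sq (n+1)).M := fun n => by
    rw [hsqsucc n]; exact hf1 (sq n)
  have Hpre : ∀ n, 0 < N.pre (pl n) (ts n) := fun n => hf2 (sq n)
  have Hpost : ∀ n, 0 < N.post (ts (n+1)) (pl n) := fun n => by
    have h := hf3 (sq n)
    have : ts (n+1) = (f (sq n)).t := by rw [hts0]; simp only []; rw [hsqsucc n]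
    rw [this]; exact h
  have Hfrz : ∀ n, ∀ M3, N.reachable (sq (n+1)).M M3 →
      M3 (pl n) < N.pre (pl n) (ts n) := fun n => by
    rw [hsqsucc n]; exact hf4 (sq n)
  have Hchain : ∀ m n, m ≤ n → N.reachable (sq m).M (sq n).M := by
    intro m n h
    induction n, h using Nat.le_induction with
    | base => exact N.reachable_refl _
    | succ n hmn ih => exact reachable_trans ih (Hr n)
  -- pigeonhole: some transition repeats in the chain
  have hQ : ∃ n, ∃ m, m < n ∧ ts m = ts n := by
    obtain ⟨a, b, hab, heq⟩ := Fintype.exists_ne_map_eq_of_card_lt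
      (fun i : Fin (Fintype.card T + 1) => ts i) (by simp)
    rcases Ne.lt_or_gt hab with h | h
    · exact ⟨b, a, h, heq⟩
    · exact ⟨a, b, h, heq.symm⟩
  set j := Nat.find hQ with hjdef
  obtain ⟨i, hij, htseq⟩ := Nat.find_spec hQ
  have hinj : ∀ a b, a < b → b < j → ts a ≠ ts b := by
    intro a b h1 h2 hne
    exact Nat.find_min hQ h2 ⟨a, h1, hne⟩
  set k := j - i with hkdef
  have hk0 : 0 < k := by omega
  haveI : NeZero k := ⟨by omega⟩
  set τ : ZMod k → T := fun c => ts (i + c.val) with hτdef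
  set π : ZMod k → P := fun c => pl (i + c.val) with hπdef
  have hvlt : ∀ c : ZMod k, c.val < k := fun c => ZMod.val_lt c
  have hts_wrap : ∀ c : ZMod k, ts (i + c.val + 1) = τ (c+1) := by
    intro c
    have h1 : (c+1 : ZMod k) = ((c.val + 1 : ℕ) : ZMod k) := by
      push_cast [ZMod.natCast_rightInverse c]
      rfl
    have hv : (c+1).val = (c.val + 1) % k := by rw [h1, ZMod.val_natCast]
    by_cases hlt : c.val + 1 < k
    · rw [hτdef]
      simp only []
      rw [hv, Nat.mod_eq_of_lt hlt]
      exact congrArg ts (by omega)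
    · have hkk : c.val + 1 = k := by have := hvlt c; omega
      rw [hτdef]; simp only []
      rw [hv, hkk, Nat.mod_self]
      have e1 : i + c.val + 1 = j := by omega
      rw [e1]
      have e2 : i + 0 = i := rfl
      rw [e2]
      exact htseq.symm
  have hτinj : Function.Injective τ := by
    intro c c' h
    by_contra hne
    have hvne : c.val ≠ c'.val := fun hv => hne (ZMod.val_injective k hv)
    rcases Nat.lt_or_ge c.val c'.val with hlt | hge
    · exact hinj (i + c.val) (i + c'.val) (by omega) (by have := hvlt c'; omega) h
    · have hlt : c'.val < c.val := by omega
      exact hinj (i + c'.val) (i + c.val) (by omega) (by have := hvlt c; omega) h.symm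
  have Hpre' : ∀ c : ZMod k, 0 < N.pre (π c) (τ c) := fun c => Hpre (i + c.val)
  have Hpost' : ∀ c : ZMod k, 0 < N.post (τ (c+1)) (π c) := fun c => by
    have h := Hpost (i + c.val)
    rwa [show i + c.val + 1 = i + c.val + 1 from rfl, hts_wrap c] at h
  have hπinj : Function.Injective π := by
    intro c c' h
    apply hτinj
    exact consumer_unique hwmg (Hpre' c) (h ▸ Hpre' c')
  have hconsume : ∀ (c : ZMod k) (u : T), 0 < N.pre (π c) u → u = τ c :=
    fun c u h => consumer_unique hwmg h (Hpre' c)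
  have hproduce : ∀ (c : ZMod k) (u : T), 0 < N.post u (π c) → u = τ (c+1) :=
    fun c u h => producer_unique hwmg h (Hpost' c)
  set D : Finset P := Finset.image π Finset.univ with hDdef
  have hmemD : ∀ {p : P}, p ∈ D ↔ ∃ c, π c = p := by
    intro p; simp [hDdef]
  have hadj : ∀ u, N.adjT D u ↔ ∃ c, u = τ c := by
    intro u
    constructor
    · rintro ⟨p, hpD, hor⟩
      obtain ⟨c, rfl⟩ := hmemD.1 hpD
      rcases hor with h | h
      · exact ⟨c, hconsume c u h⟩
      · exact ⟨c+1, hproduce c u h⟩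
    · rintro ⟨c, rfl⟩
      exact ⟨π c, hmemD.2 ⟨c, rfl⟩, Or.inl (Hpre' c)⟩
  set πs : ZMod k → {p : P // p ∈ D} := fun c => ⟨π c, hmemD.2 ⟨c, rfl⟩⟩ with hπs
  set τs : ZMod k → {t : T // N.adjT D t} := fun c => ⟨τ c, (hadj _).2 ⟨c, rfl⟩⟩ with hτs
  have surjP : ∀ p' : {p : P // p ∈ D}, ∃ c, πs c = p' := by
    rintro ⟨p, hp⟩
    obtain ⟨c, hc⟩ := hmemD.1 hp
    exact ⟨c, Subtype.ext hc⟩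
  have surjT : ∀ t' : {t : T // N.adjT D t}, ∃ c, τs c = t' := by
    rintro ⟨u, hu⟩
    obtain ⟨c, hc⟩ := (hadj u).1 hu
    exact ⟨c, Subtype.ext hc.symm⟩
  -- degree computations
  have hplacePre : ∀ c, (N.psubnet D).placePre (πs c) = {τs (c+1)} := by
    intro c
    apply Finset.eq_singleton_iff_unique_mem.2
    constructor
    · simp only [placePre, Finset.mem_filter, Finset.mem_univ, true_and]
      exact Hpost' c
    · intro t' ht'
      simp only [placePre, Finset.mem_filter, Finset.mem_univ, true_and] at ht'
      exact Subtype.ext (hproduce c t'.1 ht')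
  have hplacePost : ∀ c, (N.psubnet D).placePost (πs c) = {τs c} := by
    intro c
    apply Finset.eq_singleton_iff_unique_mem.2
    constructor
    · simp only [placePost, Finset.mem_filter, Finset.mem_univ, true_and]
      exact Hpre' c
    · intro t' ht'
      simp only [placePost, Finset.mem_filter, Finset.mem_univ, true_and] at ht'
      exact Subtype.ext (hconsume c t'.1 ht')
  have htransPre : ∀ c, (N.psubnet D).transPre (τs c) = {πs c} := by
    intro c
    apply Finset.eq_singleton_iff_unique_mem.2
    constructor
    · simp only [transPre, Finset.mem_filter, Finset.mem_univ, true_and]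
      exact Hpre' c
    · intro p' hp'
      simp only [transPre, Finset.mem_filter, Finset.mem_univ, true_and] at hp'
      obtain ⟨d, rfl⟩ := surjP p'
      have : τ c = τ d := hconsume d (τ c) hp'
      rw [hτinj this]
  have htransPost : ∀ c, (N.psubnet D).transPost (τs c) = {πs (c-1)} := by
    intro c
    apply Finset.eq_singleton_iff_unique_mem.2
    constructor
    · simp only [transPost, Finset.mem_filter, Finset.mem_univ, true_and]
      have h := Hpost' (c-1)
      rwa [sub_add_cancel] at h
    · intro p' hp'
      simp only [transPost, Finset.mem_filter, Finset.mem_univ, true_and] at hp'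
      obtain ⟨d, rfl⟩ := surjP p'
      have h1 : τ c = τ (d+1) := hproduce d (τ c) hp'
      have h2 : c = d + 1 := hτinj h1
      have : d = c - 1 := by rw [h2]; ring
      rw [this]
  -- arcs
  have arcPT : ∀ c, (N.psubnet D).arc (Sum.inl (πs c)) (Sum.inr (τs c)) := fun c => Hpre' c
  have arcTP : ∀ c, (N.psubnet D).arc (Sum.inr (τs (c+1))) (Sum.inl (πs c)) := fun c => Hpost' c
  have down : ∀ (m : ℕ) (c : ZMod k),
      Relation.ReflTransGen (N.psubnet D).arc (Sum.inl (πs c)) (Sum.inl (πs (c - (m : ZMod k)))) := by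
    intro m
    induction m with
    | zero =>
      intro c
      simp only [Nat.cast_zero, sub_zero]
      exact Relation.ReflTransGen.refl
    | succ m ih =>
      intro c
      have step1 : Relation.ReflTransGen (N.psubnet D).arc (Sum.inl (πs c))
          (Sum.inr (τs (c - (m : ZMod k)))) :=
        Relation.ReflTransGen.tail (ih c) (arcPT _)
      have harc : (N.psubnet D).arc (Sum.inr (τs (c - (m : ZMod k))))
          (Sum.inl (πs (c - (m : ZMod k) - 1))) := by
        have h := arcTP (c - (m : ZMod k) - 1)
        rwa [sub_add_cancel] at h
      have he : c - ((m+1 : ℕ) : ZMod k) = c - (m : ZMod k) - 1 := by push_cast; ring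
      rw [he]
      exact Relation.ReflTransGen.tail step1 harc
  have reachPP : ∀ c d, Relation.ReflTransGen (N.psubnet D).arc (Sum.inl (πs c)) (Sum.inl (πs d)) := by
    intro c d
    have : d = c - (((c - d).val : ℕ) : ZMod k) := by
      rw [ZMod.natCast_rightInverse (c - d)]; ring
    rw [this]
    exact down (c - d).val c
  have sc : (N.psubnet D).stronglyConnected := by
    intro x y
    have hx : (∃ c, x = Sum.inl (πs c)) ∨ (∃ c, x = Sum.inr (τs c)) := by
      cases x with
      | inl p' => exact Or.inl ((surjP p').imp fun c h => by rw [h])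
      | inr t' => exact Or.inr ((surjT t').imp fun c h => by rw [h])
    have hy : (∃ c, y = Sum.inl (πs c)) ∨ (∃ c, y = Sum.inr (τs c)) := by
      cases y with
      | inl p' => exact Or.inl ((surjP p').imp fun c h => by rw [h])
      | inr t' => exact Or.inr ((surjT t').imp fun c h => by rw [h])
    have toP : ∀ c d, Relation.ReflTransGen (N.psubnet D).arc (Sum.inr (τs c)) (Sum.inl (πs d)) := by
      intro c d
      refine Relation.ReflTransGen.trans (Relation.ReflTransGen.single ?_) (reachPP (c-1) d)
      have h := arcTP (c-1)
      rwa [sub_add_cancel] at h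
    rcases hx with ⟨c, rfl⟩ | ⟨c, rfl⟩ <;> rcases hy with ⟨d, rfl⟩ | ⟨d, rfl⟩
    · exact reachPP c d
    · exact Relation.ReflTransGen.tail (reachPP c d) (arcPT d)
    · exact toP c d
    · exact Relation.ReflTransGen.tail (toP c d) (arcPT d)
  have hcirc : (N.psubnet D).isCircuitNet := by
    refine ⟨⟨Sum.inl (πs 0)⟩, sc, ?_, ?_⟩
    · intro p'
      obtain ⟨c, rfl⟩ := surjP p'
      rw [hplacePre c, hplacePost c]
      simp
    · intro t'
      obtain ⟨c, rfl⟩ := surjT t'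
      rw [htransPre c, htransPost c]
      simp
  -- the final dead potentially-reachable marking
  set Mf : P → ℕ := (sq j).M with hMfdef
  have HMf : ∀ c, Mf (π c) < N.pre (π c) (τ c) := by
    intro c
    exact Hfrz (i + c.val) Mf (Hchain (i + c.val + 1) j (by have := hvlt c; omega))
  obtain ⟨σf, hσf⟩ := (sq j).hr
  refine ⟨D, hcirc, fun p' => Mf p'.1, ⟨fun t' => cnt σf t'.1, ?_⟩, ?_⟩
  · intro p'
    have hse := N.state_eq σf M0 Mf hσf p'.1
    have hzero : ∀ t, ¬ N.adjT D t → N.inc p'.1 t * (cnt σf t : ℤ) = 0 := by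
      intro t ht
      have hpre0 : N.pre p'.1 t = 0 := by
        by_contra h0
        exact ht ⟨p'.1, p'.2, Or.inl (Nat.pos_of_ne_zero h0)⟩
      have hpost0 : N.post t p'.1 = 0 := by
        by_contra h0
        exact ht ⟨p'.1, p'.2, Or.inr (Nat.pos_of_ne_zero h0)⟩
      have h1 : N.inc p'.1 t = 0 := by unfold inc; rw [hpre0, hpost0]; simp
      rw [h1]; simp
    have hsum := N.sum_adj D (fun t => N.inc p'.1 t * (cnt σf t : ℤ)) hzero
    show (Mf p'.1 : ℤ) = (M0 p'.1 : ℤ) +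
      ∑ t' : {t : T // N.adjT D t}, (N.psubnet D).inc p' t' * (cnt σf t'.1 : ℤ)
    rw [hse, hsum]
    rfl
  · intro t' hen
    obtain ⟨c, rfl⟩ := surjT t'
    have h := hen (πs c)
    exact absurd h (by exact not_le.2 (HMf c))

end PetriNet

/-- A WMG≤ system without source places is live iff every elementary circuit
P-subsystem of it satisfies property E (every potentially reachable marking of
the subsystem enables some transition of the subsystem). -/
theorem stmt6 {P T : Type} [Fintype P] [Fintype T]
    (N : PetriNet P T) (M0 : P → ℕ)
    (hwmg : N.isWMGle) (hnosrc : ∀ p : P, ∃ t : T, 0 < N.post t p) :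
    N.live M0 ↔
      ∀ D : Finset P, (N.psubnet D).isCircuitNet →
        ∀ M, (N.psubnet D).potReach (fun p => M0 p.1) M →
          ∃ t, (N.psubnet D).enabled M t := by
  constructor
  · intro hlive D hcirc M hpr
    exact N.live_to_E M0 hwmg hlive D hcirc M hpr
  · intro hE
    by_contra hnl
    obtain ⟨D, hcirc, M, hpr, hdead⟩ := N.not_live_bad M0 hwmg hnosrc hnl
    obtain ⟨t, ht⟩ := hE D hcirc M hpr
    exact hdead t ht
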